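/- Suppose b ∈ EuclideanSpace ℝ (Fin p) is nonzero and satisfies ⟪b, X_j − X_i⟫ ≤ 0 for every pair (i,j) ∈ D. Then for every β and every 0 ≤ s ≤ t one has L(β + s·b) ≤ L(β + t·b), i.e., t ↦ L(β + t·b) is nondecreasing on [0,∞). If moreover ⟪b, X_j − X_i⟫ < 0 for at least one pair (i,j) ∈ D, then L(β + t·b) > L(β) for every β and every t > 0; consequently L has no global maximizer, i.e., the maximum partial likelihood estimator does not exist. -/

import Mathlib

open Finset

/-- The Cox log partial likelihood. -/
noncomputable def coxLogPartialLik (n p : ℕ) (Y : Fin n → ℝ) (Δ : Fin n → Bool)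
    (X : Fin n → EuclideanSpace ℝ (Fin p)) (β : EuclideanSpace ℝ (Fin p)) : ℝ :=
  (1 / (n : ℝ)) * ∑ i ∈ Finset.univ.filter (fun i => Δ i = true),
    ((inner ℝ (X i) β : ℝ) -
      Real.log ((1 / (n : ℝ)) * ∑ j ∈ Finset.univ.filter (fun j => Y i ≤ Y j),
        Real.exp (inner ℝ (X j) β : ℝ)))

section CoxAux

variable {n p : ℕ}

private lemma cox_per_term_le (hn : 1 ≤ n) (Y : Fin n → ℝ) (Δ : Fin n → Bool)
    (X : Fin n → EuclideanSpace ℝ (Fin p)) (b : EuclideanSpace ℝ (Fin p))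
    (hle : ∀ i j : Fin n, Δ i = true → Y i ≤ Y j → j ≠ i →
      (inner ℝ b (X j - X i) : ℝ) ≤ 0)
    (β : EuclideanSpace ℝ (Fin p)) (s t : ℝ) (hst : s ≤ t)
    (i : Fin n) (hi : Δ i = true) :
    ((inner ℝ (X i) (β + s • b) : ℝ) -
      Real.log ((1 / (n : ℝ)) * ∑ j ∈ Finset.univ.filter (fun j => Y i ≤ Y j),
        Real.exp (inner ℝ (X j) (β + s • b) : ℝ)))
    ≤ ((inner ℝ (X i) (β + t • b) : ℝ) -
      Real.log ((1 / (n : ℝ)) * ∑ j ∈ Finset.univ.filter (fun j => Y i ≤ Y j),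
        Real.exp (inner ℝ (X j) (β + t • b) : ℝ))) := by
  classical
  set F := Finset.univ.filter (fun j => Y i ≤ Y j) with hF
  have hexp : ∀ (j : Fin n) (u : ℝ),
      (inner ℝ (X j) (β + u • b) : ℝ) = inner ℝ (X j) β + u * inner ℝ (X j) b := by
    intro j u; rw [inner_add_right, real_inner_smul_right]
  set a : Fin n → ℝ := fun j => inner ℝ (X j) b with ha
  have hdiff : ∀ j : Fin n, a j - a i = (inner ℝ b (X j - X i) : ℝ) := by
    intro j
    rw [inner_sub_right]
    simp only [ha]
    rw [real_inner_comm b (X j), real_inner_comm b (X i)]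
  have hiF : i ∈ F := by simp [hF]
  have hDpos : (0:ℝ) < 1 / (n:ℝ) := by positivity
  have hSpos : ∀ u : ℝ, 0 < ∑ j ∈ F, Real.exp (inner ℝ (X j) (β + u • b) : ℝ) := by
    intro u
    exact Finset.sum_pos' (fun j _ => (Real.exp_pos _).le) ⟨i, hiF, Real.exp_pos _⟩
  have hterm : ∀ j ∈ F, Real.exp (inner ℝ (X j) (β + t • b) : ℝ)
      ≤ Real.exp ((t - s) * a i) * Real.exp (inner ℝ (X j) (β + s • b) : ℝ) := by
    intro j hj
    rw [← Real.exp_add, Real.exp_le_exp, hexp, hexp]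
    have h1 : (t - s) * (a j - a i) ≤ 0 := by
      rcases eq_or_ne j i with rfl | hne
      · simp
      · have := hle i j hi (by simpa [hF] using hj) hne
        rw [← hdiff] at this
        exact mul_nonpos_of_nonneg_of_nonpos (by linarith) this
    nlinarith [h1]
  have hsum : ∑ j ∈ F, Real.exp (inner ℝ (X j) (β + t • b) : ℝ)
      ≤ Real.exp ((t - s) * a i) * ∑ j ∈ F, Real.exp (inner ℝ (X j) (β + s • b) : ℝ) := by
    rw [Finset.mul_sum]
    exact Finset.sum_le_sum hterm
  have hlog : Real.log ((1 / (n:ℝ)) * ∑ j ∈ F, Real.exp (inner ℝ (X j) (β + t • b) : ℝ))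
      ≤ (t - s) * a i +
        Real.log ((1 / (n:ℝ)) * ∑ j ∈ F, Real.exp (inner ℝ (X j) (β + s • b) : ℝ)) := by
    have h1 : (1 / (n:ℝ)) * ∑ j ∈ F, Real.exp (inner ℝ (X j) (β + t • b) : ℝ)
        ≤ Real.exp ((t - s) * a i) *
          ((1 / (n:ℝ)) * ∑ j ∈ F, Real.exp (inner ℝ (X j) (β + s • b) : ℝ)) := by
      nlinarith [hsum, hDpos]
    calc Real.log ((1 / (n:ℝ)) * ∑ j ∈ F, Real.exp (inner ℝ (X j) (β + t • b) : ℝ))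
        ≤ Real.log (Real.exp ((t - s) * a i) *
          ((1 / (n:ℝ)) * ∑ j ∈ F, Real.exp (inner ℝ (X j) (β + s • b) : ℝ))) :=
          Real.log_le_log (mul_pos hDpos (hSpos t)) h1
      _ = (t - s) * a i +
          Real.log ((1 / (n:ℝ)) * ∑ j ∈ F, Real.exp (inner ℝ (X j) (β + s • b) : ℝ)) := by
          rw [Real.log_mul (Real.exp_ne_zero _) (mul_pos hDpos (hSpos s)).ne', Real.log_exp]
  have hinner : (inner ℝ (X i) (β + t • b) : ℝ) - (inner ℝ (X i) (β + s • b) : ℝ)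
      = (t - s) * a i := by
    rw [hexp, hexp]; ring
  linarith

private lemma cox_per_term_lt (hn : 1 ≤ n) (Y : Fin n → ℝ) (Δ : Fin n → Bool)
    (X : Fin n → EuclideanSpace ℝ (Fin p)) (b : EuclideanSpace ℝ (Fin p))
    (hle : ∀ i j : Fin n, Δ i = true → Y i ≤ Y j → j ≠ i →
      (inner ℝ b (X j - X i) : ℝ) ≤ 0)
    (β : EuclideanSpace ℝ (Fin p)) (s t : ℝ) (hst : s < t)
    (i : Fin n) (hi : Δ i = true)
    (j0 : Fin n) (hYj0 : Y i ≤ Y j0) (hj0i : j0 ≠ i)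
    (hstrict : (inner ℝ b (X j0 - X i) : ℝ) < 0) :
    ((inner ℝ (X i) (β + s • b) : ℝ) -
      Real.log ((1 / (n : ℝ)) * ∑ j ∈ Finset.univ.filter (fun j => Y i ≤ Y j),
        Real.exp (inner ℝ (X j) (β + s • b) : ℝ)))
    < ((inner ℝ (X i) (β + t • b) : ℝ) -
      Real.log ((1 / (n : ℝ)) * ∑ j ∈ Finset.univ.filter (fun j => Y i ≤ Y j),
        Real.exp (inner ℝ (X j) (β + t • b) : ℝ))) := by
  classical
  set F := Finset.univ.filter (fun j => Y i ≤ Y j) with hF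
  have hexp : ∀ (j : Fin n) (u : ℝ),
      (inner ℝ (X j) (β + u • b) : ℝ) = inner ℝ (X j) β + u * inner ℝ (X j) b := by
    intro j u; rw [inner_add_right, real_inner_smul_right]
  set a : Fin n → ℝ := fun j => inner ℝ (X j) b with ha
  have hdiff : ∀ j : Fin n, a j - a i = (inner ℝ b (X j - X i) : ℝ) := by
    intro j
    rw [inner_sub_right]
    simp only [ha]
    rw [real_inner_comm b (X j), real_inner_comm b (X i)]
  have hiF : i ∈ F := by simp [hF]
  have hj0F : j0 ∈ F := by simp [hF, hYj0]
  have hDpos : (0:ℝ) < 1 / (n:ℝ) := by positivity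
  have hSpos : ∀ u : ℝ, 0 < ∑ j ∈ F, Real.exp (inner ℝ (X j) (β + u • b) : ℝ) := by
    intro u
    exact Finset.sum_pos' (fun j _ => (Real.exp_pos _).le) ⟨i, hiF, Real.exp_pos _⟩
  have hterm : ∀ j ∈ F, Real.exp (inner ℝ (X j) (β + t • b) : ℝ)
      ≤ Real.exp ((t - s) * a i) * Real.exp (inner ℝ (X j) (β + s • b) : ℝ) := by
    intro j hj
    rw [← Real.exp_add, Real.exp_le_exp, hexp, hexp]
    have h1 : (t - s) * (a j - a i) ≤ 0 := by
      rcases eq_or_ne j i with rfl | hne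
      · simp
      · have := hle i j hi (by simpa [hF] using hj) hne
        rw [← hdiff] at this
        exact mul_nonpos_of_nonneg_of_nonpos (by linarith) this
    nlinarith [h1]
  have htermj0 : Real.exp (inner ℝ (X j0) (β + t • b) : ℝ)
      < Real.exp ((t - s) * a i) * Real.exp (inner ℝ (X j0) (β + s • b) : ℝ) := by
    rw [← Real.exp_add, Real.exp_lt_exp, hexp, hexp]
    have h1 : (t - s) * (a j0 - a i) < 0 := by
      rw [hdiff]
      exact mul_neg_of_pos_of_neg (by linarith) hstrict
    nlinarith [h1]
  have hsum : ∑ j ∈ F, Real.exp (inner ℝ (X j) (β + t • b) : ℝ)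
      < Real.exp ((t - s) * a i) * ∑ j ∈ F, Real.exp (inner ℝ (X j) (β + s • b) : ℝ) := by
    rw [Finset.mul_sum]
    exact Finset.sum_lt_sum hterm ⟨j0, hj0F, htermj0⟩
  have hlog : Real.log ((1 / (n:ℝ)) * ∑ j ∈ F, Real.exp (inner ℝ (X j) (β + t • b) : ℝ))
      < (t - s) * a i +
        Real.log ((1 / (n:ℝ)) * ∑ j ∈ F, Real.exp (inner ℝ (X j) (β + s • b) : ℝ)) := by
    have h1 : (1 / (n:ℝ)) * ∑ j ∈ F, Real.exp (inner ℝ (X j) (β + t • b) : ℝ)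
        < Real.exp ((t - s) * a i) *
          ((1 / (n:ℝ)) * ∑ j ∈ F, Real.exp (inner ℝ (X j) (β + s • b) : ℝ)) := by
      nlinarith [hsum, hDpos]
    calc Real.log ((1 / (n:ℝ)) * ∑ j ∈ F, Real.exp (inner ℝ (X j) (β + t • b) : ℝ))
        < Real.log (Real.exp ((t - s) * a i) *
          ((1 / (n:ℝ)) * ∑ j ∈ F, Real.exp (inner ℝ (X j) (β + s • b) : ℝ))) :=
          Real.log_lt_log (mul_pos hDpos (hSpos t)) h1
      _ = (t - s) * a i +
          Real.log ((1 / (n:ℝ)) * ∑ j ∈ F, Real.exp (inner ℝ (X j) (β + s • b) : ℝ)) := by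
          rw [Real.log_mul (Real.exp_ne_zero _) (mul_pos hDpos (hSpos s)).ne', Real.log_exp]
  have hinner : (inner ℝ (X i) (β + t • b) : ℝ) - (inner ℝ (X i) (β + s • b) : ℝ)
      = (t - s) * a i := by
    rw [hexp, hexp]; ring
  linarith

private lemma cox_le (hn : 1 ≤ n) (Y : Fin n → ℝ) (Δ : Fin n → Bool)
    (X : Fin n → EuclideanSpace ℝ (Fin p)) (b : EuclideanSpace ℝ (Fin p))
    (hle : ∀ i j : Fin n, Δ i = true → Y i ≤ Y j → j ≠ i →
      (inner ℝ b (X j - X i) : ℝ) ≤ 0)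
    (β : EuclideanSpace ℝ (Fin p)) (s t : ℝ) (hst : s ≤ t) :
    coxLogPartialLik n p Y Δ X (β + s • b) ≤ coxLogPartialLik n p Y Δ X (β + t • b) := by
  unfold coxLogPartialLik
  have hDpos : (0:ℝ) ≤ 1 / (n:ℝ) := by positivity
  refine mul_le_mul_of_nonneg_left (Finset.sum_le_sum ?_) hDpos
  intro i hi
  exact cox_per_term_le hn Y Δ X b hle β s t hst i (by simpa using hi)

private lemma cox_lt (hn : 1 ≤ n) (Y : Fin n → ℝ) (Δ : Fin n → Bool)
    (X : Fin n → EuclideanSpace ℝ (Fin p)) (b : EuclideanSpace ℝ (Fin p))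
    (hle : ∀ i j : Fin n, Δ i = true → Y i ≤ Y j → j ≠ i →
      (inner ℝ b (X j - X i) : ℝ) ≤ 0)
    (i0 j0 : Fin n) (hΔ0 : Δ i0 = true) (hY0 : Y i0 ≤ Y j0) (hji : j0 ≠ i0)
    (hstrict : (inner ℝ b (X j0 - X i0) : ℝ) < 0)
    (β : EuclideanSpace ℝ (Fin p)) (s t : ℝ) (hst : s < t) :
    coxLogPartialLik n p Y Δ X (β + s • b) < coxLogPartialLik n p Y Δ X (β + t • b) := by
  unfold coxLogPartialLik
  have hDpos : (0:ℝ) < 1 / (n:ℝ) := by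
    have : (0:ℝ) < (n:ℝ) := by exact_mod_cast Nat.lt_of_lt_of_le Nat.zero_lt_one hn
    positivity
  refine mul_lt_mul_of_pos_left (Finset.sum_lt_sum ?_ ?_) hDpos
  · intro i hi
    exact cox_per_term_le hn Y Δ X b hle β s t hst.le i (by simpa using hi)
  · exact ⟨i0, by simpa using hΔ0,
      cox_per_term_lt hn Y Δ X b hle β s t hst i0 hΔ0 j0 hY0 hji hstrict⟩

end CoxAux

/-- If a nonzero direction `b` satisfies `⟪b, X j - X i⟫ ≤ 0` for every pair in the
comparison set `D = {(i,j) : Δ i = 1, Y j ≥ Y i, j ≠ i}`, then `t ↦ L (β + t • b)` is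
nondecreasing on `[0, ∞)` for every `β`.  If moreover the inequality is strict for at
least one pair in `D`, then `L (β + t • b) > L β` for every `β` and every `t > 0`, and
consequently the MPLE (a global maximizer of `L`) does not exist. -/
theorem coxLogPartialLik_monotone_direction (n p : ℕ) (hn : 1 ≤ n) (hp : 1 ≤ p)
    (Y : Fin n → ℝ) (Δ : Fin n → Bool) (X : Fin n → EuclideanSpace ℝ (Fin p))
    (b : EuclideanSpace ℝ (Fin p)) (hb : b ≠ 0)
    (hle : ∀ i j : Fin n, Δ i = true → Y i ≤ Y j → j ≠ i →
      (inner ℝ b (X j - X i) : ℝ) ≤ 0) :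
    (∀ (β : EuclideanSpace ℝ (Fin p)) (s t : ℝ), 0 ≤ s → s ≤ t →
      coxLogPartialLik n p Y Δ X (β + s • b) ≤ coxLogPartialLik n p Y Δ X (β + t • b)) ∧
    ((∃ i j : Fin n, Δ i = true ∧ Y i ≤ Y j ∧ j ≠ i ∧ (inner ℝ b (X j - X i) : ℝ) < 0) →
      (∀ (β : EuclideanSpace ℝ (Fin p)) (t : ℝ), 0 < t →
        coxLogPartialLik n p Y Δ X β < coxLogPartialLik n p Y Δ X (β + t • b)) ∧
      ¬ ∃ βhat : EuclideanSpace ℝ (Fin p), ∀ β : EuclideanSpace ℝ (Fin p),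
          coxLogPartialLik n p Y Δ X β ≤ coxLogPartialLik n p Y Δ X βhat) := by
  constructor
  · intro β s t _ hst
    exact cox_le hn Y Δ X b hle β s t hst
  · rintro ⟨i0, j0, hΔ0, hY0, hji, hstrict⟩
    have hmain : ∀ (β : EuclideanSpace ℝ (Fin p)) (t : ℝ), 0 < t →
        coxLogPartialLik n p Y Δ X β < coxLogPartialLik n p Y Δ X (β + t • b) := by
      intro β t ht
      have := cox_lt hn Y Δ X b hle i0 j0 hΔ0 hY0 hji hstrict β 0 t ht
      simpa using this
    refine ⟨hmain, ?_⟩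
    rintro ⟨βhat, hmax⟩
    have h1 := hmain βhat 1 one_pos
    exact absurd (hmax (βhat + (1:ℝ) • b)) (not_le.mpr h1)
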